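/- Let k₀ ≥ 3 be an integer and let M ≥ 2 be a real number with log log k₀ ≤ M. Then Σ_{ℓ=1}^{k₀} (1 + (ℓ−1)·M·log(ℓe))^{−1} ≤ 3. -/

import Mathlib

open Real

/-- Key pointwise inequality: for `a ≥ 3`, `M ≥ 2`,
the term is bounded by a telescoping difference. -/
lemma stmt19_key (a M : ℝ) (ha : 3 ≤ a) (hM : 2 ≤ M) :
    (1 + (a - 1) * M * (Real.log a + 1))⁻¹ ≤
      3 / (2 * M) * (Real.log (1 + Real.log a) - Real.log (1 + Real.log (a - 1))) := by
  have ha0 : (0:ℝ) < a := by linarith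
  have ha1 : (0:ℝ) < a - 1 := by linarith
  have hM0 : (0:ℝ) < M := by linarith
  have hla : 1 ≤ Real.log a := by
    rw [Real.le_log_iff_exp_le ha0]
    have := Real.exp_one_lt_d9
    linarith
  have hla1 : 0 < Real.log (a - 1) := Real.log_pos (by linarith)
  set u := 1 + Real.log (a - 1) with hu
  set v := 1 + Real.log a with hv
  have hu0 : (0:ℝ) < u := by rw [hu]; linarith
  have hv0 : (0:ℝ) < v := by rw [hv]; linarith
  have hmono : Real.log (a - 1) ≤ Real.log a :=
    Real.log_le_log ha1 (by linarith)
  have huv : u ≤ v := by rw [hu, hv]; linarith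
  -- log a - log (a-1) ≥ 1/a
  have hd : 1 / a ≤ Real.log a - Real.log (a - 1) := by
    have h1 : Real.log ((a - 1) / a) ≤ (a - 1) / a - 1 :=
      Real.log_le_sub_one_of_pos (by positivity)
    rw [Real.log_div (by linarith) (by linarith)] at h1
    have h2 : (a - 1) / a - 1 = -(1 / a) := by field_simp; ring
    rw [h2] at h1
    linarith
  -- log v - log u ≥ (v - u)/v
  have hA : (v - u) / v ≤ Real.log v - Real.log u := by
    have h1 : Real.log (u / v) ≤ u / v - 1 :=
      Real.log_le_sub_one_of_pos (by positivity)
    rw [Real.log_div (ne_of_gt hu0) (ne_of_gt hv0)] at h1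
    have h2 : u / v - 1 = -((v - u) / v) := by field_simp; ring
    rw [h2] at h1
    linarith
  -- hence log v - log u ≥ 1/(a*v)
  have hB : 1 / (a * v) ≤ Real.log v - Real.log u := by
    have hvu : v - u = Real.log a - Real.log (a - 1) := by rw [hu, hv]; ring
    have hd' : 1 ≤ (Real.log a - Real.log (a - 1)) * a := (div_le_iff₀ ha0).mp hd
    have h3 : 1 / (a * v) ≤ (v - u) / v := by
      rw [div_le_div_iff₀ (by positivity) hv0, hvu]
      nlinarith [hd', hv0]
    linarith
  -- denominator bound
  have hden : 2 / 3 * (a * M * v) ≤ 1 + (a - 1) * M * (Real.log a + 1) := by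
    have hve : Real.log a + 1 = v := by rw [hv]; ring
    rw [hve]
    have h0 : 0 ≤ (a / 3 - 1) * M * v := by
      apply mul_nonneg (mul_nonneg (by linarith) hM0.le) hv0.le
    nlinarith [h0]
  have hpos : (0:ℝ) < 2 / 3 * (a * M * v) := by positivity
  have hLHS : (1 + (a - 1) * M * (Real.log a + 1))⁻¹ ≤ 3 / (2 * (a * M * v)) := by
    rw [inv_eq_one_div]
    have := one_div_le_one_div_of_le hpos hden
    calc 1 / (1 + (a - 1) * M * (Real.log a + 1)) ≤ 1 / (2 / 3 * (a * M * v)) := this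
      _ = 3 / (2 * (a * M * v)) := by field_simp
  calc (1 + (a - 1) * M * (Real.log a + 1))⁻¹ ≤ 3 / (2 * (a * M * v)) := hLHS
    _ = 3 / (2 * M) * (1 / (a * v)) := by field_simp
    _ ≤ 3 / (2 * M) * (Real.log v - Real.log u) := by
        apply mul_le_mul_of_nonneg_left hB (by positivity)

/-- Final numeric inequality. -/
lemma stmt19_final (M L : ℝ) (hM : 2 ≤ M) (hL1 : 1 ≤ L) (hL : Real.log L ≤ M) :
    1 + (1 + M * (Real.log 2 + 1))⁻¹ +
      3 / (2 * M) * (Real.log (1 + L) - Real.log (1 + Real.log 2)) ≤ 3 := by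
  have hM0 : (0:ℝ) < M := by linarith
  have l2u : Real.log 2 < 0.6931471808 := Real.log_two_lt_d9
  have l2l : 0.6931471803 < Real.log 2 := Real.log_two_gt_d9
  set c := Real.log 2 with hc
  -- log (1+L) ≤ log 2 + log L ≤ c + M
  have h1L : Real.log (1 + L) ≤ c + M := by
    have h1 : Real.log (1 + L) ≤ Real.log (2 * L) :=
      Real.log_le_log (by linarith) (by linarith)
    rw [Real.log_mul (by norm_num) (by linarith)] at h1
    linarith
  -- lower bound for d := log (1+c)
  set d := Real.log (1 + c) with hd
  have hc0 : (0:ℝ) < c := by linarith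
  have hdl : 1 - 1 / (1 + c) ≤ d := by
    have h1 : Real.log (1 / (1 + c)) ≤ 1 / (1 + c) - 1 :=
      Real.log_le_sub_one_of_pos (by positivity)
    rw [Real.log_div (by norm_num) (by positivity), Real.log_one] at h1
    rw [hd]; linarith
  have hd409 : (0.409 : ℝ) ≤ d := by
    have h1c : (0:ℝ) < 1 + c := by linarith
    have h2 : 1 / (1 + c) ≤ 0.591 := by
      rw [div_le_iff₀ h1c]
      nlinarith
    linarith
  -- main term bound
  have hmain : 3 / (2 * M) * (Real.log (1 + L) - Real.log (1 + c)) ≤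
      3 / 2 + 3 / (2 * M) * (c - d) := by
    have h2 : Real.log (1 + L) - d ≤ c + M - d := by linarith
    have h3 : 3 / (2 * M) * (Real.log (1 + L) - d) ≤ 3 / (2 * M) * (c + M - d) :=
      mul_le_mul_of_nonneg_left h2 (by positivity)
    have h4 : 3 / (2 * M) * (c + M - d) = 3 / 2 + 3 / (2 * M) * (c - d) := by
      field_simp; ring
    rw [← hd]; linarith
  have hcd : 0 ≤ c - d := by
    have : d ≤ (1 + c) - 1 := Real.log_le_sub_one_of_pos (by linarith)
    linarith
  have hcd2 : 3 / (2 * M) * (c - d) ≤ 3 / 4 * (c - d) := by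
    apply mul_le_mul_of_nonneg_right _ hcd
    rw [div_le_div_iff₀ (by positivity) (by norm_num)]
    linarith
  have hinv : (1 + M * (c + 1))⁻¹ ≤ (1 + 2 * (c + 1))⁻¹ := by
    apply inv_anti₀ (by positivity)
    nlinarith
  have hinv2 : (1 + 2 * (c + 1))⁻¹ ≤ 0.228 := by
    rw [inv_le_comm₀ (by positivity) (by norm_num)]
    nlinarith
  nlinarith [hmain, hcd2, hinv, hinv2]

theorem stmt19 (k₀ : ℕ) (hk₀ : 3 ≤ k₀) (M : ℝ) (hM : 2 ≤ M)
    (hlog : Real.log (Real.log k₀) ≤ M) :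
    (∑ ℓ ∈ Finset.Icc 1 k₀,
        (1 + ((ℓ : ℝ) - 1) * M * Real.log (ℓ * Real.exp 1))⁻¹) ≤ 3 := by
  have hM0 : (0:ℝ) < M := by linarith
  have hk3 : (3:ℝ) ≤ (k₀:ℝ) := by exact_mod_cast hk₀
  -- log of N * e
  have hle : ∀ n : ℕ, 1 ≤ n → Real.log (n * Real.exp 1) = Real.log n + 1 := by
    intro n hn
    have hn0 : (n:ℝ) ≠ 0 := Nat.cast_ne_zero.mpr (by omega)
    rw [Real.log_mul hn0 (Real.exp_ne_zero 1), Real.log_exp]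
  -- split the sum
  have hsplit : Finset.Icc 1 k₀ = insert 1 (insert 2 (Finset.Icc 3 k₀)) := by
    ext x; simp only [Finset.mem_Icc, Finset.mem_insert]; omega
  rw [hsplit, Finset.sum_insert (by simp only [Finset.mem_insert, Finset.mem_Icc]; omega),
    Finset.sum_insert (by simp only [Finset.mem_Icc]; omega)]
  -- term at 1
  have h1 : (1 + ((1:ℕ) - 1 : ℝ) * M * Real.log ((1:ℕ) * Real.exp 1))⁻¹ = 1 := by
    norm_num
  -- term at 2
  have h2 : (1 + ((2:ℕ) - 1 : ℝ) * M * Real.log ((2:ℕ) * Real.exp 1))⁻¹ =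
      (1 + M * (Real.log 2 + 1))⁻¹ := by
    rw [hle 2 (by norm_num)]
    norm_num
  -- main sum: telescoping bound
  set g : ℕ → ℝ := fun i => Real.log (1 + Real.log ((i:ℝ) + 2)) with hg
  have hmain : (∑ ℓ ∈ Finset.Icc 3 k₀,
      (1 + ((ℓ : ℝ) - 1) * M * Real.log (ℓ * Real.exp 1))⁻¹) ≤
      3 / (2 * M) * (Real.log (1 + Real.log k₀) - Real.log (1 + Real.log 2)) := by
    rw [show Finset.Icc 3 k₀ = Finset.Ico 3 (k₀ + 1) from (Finset.Ico_add_one_right_eq_Icc 3 k₀).symm,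
      Finset.sum_Ico_eq_sum_range]
    have hterm : ∀ i ∈ Finset.range (k₀ + 1 - 3),
        (1 + (((3 + i : ℕ) : ℝ) - 1) * M * Real.log ((3 + i : ℕ) * Real.exp 1))⁻¹ ≤
        3 / (2 * M) * (g (i + 1) - g i) := by
      intro i _
      have hcast : ((3 + i : ℕ) : ℝ) = (i : ℝ) + 3 := by push_cast; ring
      rw [hle (3 + i) (by omega), hcast]
      have := stmt19_key ((i:ℝ) + 3) M (by linarith [Nat.cast_nonneg (α := ℝ) i]) hM
      have heq1 : g (i + 1) = Real.log (1 + Real.log ((i:ℝ) + 3)) := by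
        rw [hg]; push_cast; ring_nf
      have heq2 : g i = Real.log (1 + Real.log ((i:ℝ) + 3 - 1)) := by
        rw [hg, show ((i:ℝ) + 3 - 1) = (i:ℝ) + 2 from by ring]
      rw [heq1, heq2]
      convert this using 4 <;> ring
    calc (∑ i ∈ Finset.range (k₀ + 1 - 3),
          (1 + (((3 + i : ℕ) : ℝ) - 1) * M * Real.log ((3 + i : ℕ) * Real.exp 1))⁻¹)
        ≤ ∑ i ∈ Finset.range (k₀ + 1 - 3), 3 / (2 * M) * (g (i + 1) - g i) :=
          Finset.sum_le_sum hterm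
      _ = 3 / (2 * M) * (g (k₀ + 1 - 3) - g 0) := by
          rw [← Finset.mul_sum, Finset.sum_range_sub g]
      _ = 3 / (2 * M) * (Real.log (1 + Real.log k₀) - Real.log (1 + Real.log 2)) := by
          have : ((k₀ + 1 - 3 : ℕ) : ℝ) + 2 = (k₀ : ℝ) := by
            have : k₀ + 1 - 3 = k₀ - 2 := by omega
            rw [this, Nat.cast_sub (by omega)]; ring
          rw [hg]
          simp only [this]
          norm_num
  -- bound for each term positivity
  have hL1 : 1 ≤ Real.log k₀ := by
    rw [Real.le_log_iff_exp_le (by linarith)]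
    have := Real.exp_one_lt_d9
    linarith
  have := stmt19_final M (Real.log k₀) hM hL1 hlog
  rw [h1, h2]
  linarith [hmain]
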